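/- Let M_1, …, M_{n_w} ∈ ℝ^{n_x × n_z} with n_z = n_x + n_u, W ∈ ℝ^{n_w × n_w} symmetric, E and E* as defined, K ∈ ℝ^{n_u × n_x} a gain with L_K = [I, Kᵀ] and policy map π_K(X) = L_Kᵀ X L_K, and H ∈ ℝ^{n_z × n_z} symmetric. Suppose P ∈ ℝ^{n_x × n_x} is symmetric and satisfies the generalized Lyapunov equation P = L_K (H + E*(P)) L_Kᵀ. Define the Q-function Q(Z) = tr[Z H] + tr[P · E(Z)] for symmetric Z ∈ ℝ^{n_z × n_z}. Then Q is a fixed point of the policy Bellman operator F_π: for every symmetric Z, tr[Z H] + Q(π_K(E(Z))) = Q(Z). -/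

import Mathlib

open Matrix BigOperators

/-- The completely positive operator `E(Z) = Σ_{i,j} W i j • M i * Z * (M j)ᵀ`. -/
def cpE {n_w n_x n_u : ℕ} (W : Matrix (Fin n_w) (Fin n_w) ℝ)
    (M : Fin n_w → Matrix (Fin n_x) (Fin n_x ⊕ Fin n_u) ℝ)
    (Z : Matrix (Fin n_x ⊕ Fin n_u) (Fin n_x ⊕ Fin n_u) ℝ) :
    Matrix (Fin n_x) (Fin n_x) ℝ :=
  ∑ i : Fin n_w, ∑ j : Fin n_w, W i j • (M i * Z * (M j)ᵀ)

/-- Its adjoint `E*(P) = Σ_{i,j} W i j • (M i)ᵀ * P * M j`. -/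
def cpEstar {n_w n_x n_u : ℕ} (W : Matrix (Fin n_w) (Fin n_w) ℝ)
    (M : Fin n_w → Matrix (Fin n_x) (Fin n_x ⊕ Fin n_u) ℝ)
    (P : Matrix (Fin n_x) (Fin n_x) ℝ) :
    Matrix (Fin n_x ⊕ Fin n_u) (Fin n_x ⊕ Fin n_u) ℝ :=
  ∑ i : Fin n_w, ∑ j : Fin n_w, W i j • ((M i)ᵀ * P * M j)

/-- The matrix `L_K = [I, Kᵀ]` associated with a gain `K`. -/
def gainL {n_x n_u : ℕ} (K : Matrix (Fin n_u) (Fin n_x) ℝ) :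
    Matrix (Fin n_x) (Fin n_x ⊕ Fin n_u) ℝ :=
  Matrix.fromCols 1 Kᵀ

/-- The policy map `π_K(X) = L_Kᵀ X L_K`. -/
def policy {n_x n_u : ℕ} (K : Matrix (Fin n_u) (Fin n_x) ℝ)
    (X : Matrix (Fin n_x) (Fin n_x) ℝ) :
    Matrix (Fin n_x ⊕ Fin n_u) (Fin n_x ⊕ Fin n_u) ℝ :=
  (gainL K)ᵀ * X * gainL K

private lemma sandwich_trace {m n : Type*} [Fintype m] [Fintype n]
    (L : Matrix m n ℝ) (X : Matrix m m ℝ) (H : Matrix n n ℝ) :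
    ((Lᵀ * X * L) * H).trace = (X * (L * H * Lᵀ)).trace := by
  rw [Matrix.mul_assoc (Lᵀ * X) L H, Matrix.trace_mul_comm,
    ← Matrix.mul_assoc, Matrix.trace_mul_comm]

private lemma trace_cyc_aux {n_x n_u : ℕ}
    (P : Matrix (Fin n_x) (Fin n_x) ℝ)
    (A B : Matrix (Fin n_x) (Fin n_x ⊕ Fin n_u) ℝ)
    (Z : Matrix (Fin n_x ⊕ Fin n_u) (Fin n_x ⊕ Fin n_u) ℝ) :
    (P * (A * Z * Bᵀ)).trace = (Bᵀ * P * A * Z).trace := by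
  rw [show P * (A * Z * Bᵀ) = (P * A * Z) * Bᵀ by simp only [Matrix.mul_assoc],
    Matrix.trace_mul_comm]
  simp only [Matrix.mul_assoc]

private lemma adj_trace {n_w n_x n_u : ℕ}
    (W : Matrix (Fin n_w) (Fin n_w) ℝ) (hW : W.IsSymm)
    (M : Fin n_w → Matrix (Fin n_x) (Fin n_x ⊕ Fin n_u) ℝ)
    (P : Matrix (Fin n_x) (Fin n_x) ℝ)
    (Z : Matrix (Fin n_x ⊕ Fin n_u) (Fin n_x ⊕ Fin n_u) ℝ) :
    (P * cpE W M Z).trace = (cpEstar W M P * Z).trace := by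
  unfold cpE cpEstar
  simp only [Matrix.mul_sum, Matrix.sum_mul, Matrix.trace_sum,
    Matrix.mul_smul, Matrix.smul_mul, Matrix.trace_smul]
  rw [Finset.sum_comm]
  refine Finset.sum_congr rfl fun i _ => Finset.sum_congr rfl fun j _ => ?_
  rw [hW.apply j i, trace_cyc_aux]

/-- If `P` solves the generalized Lyapunov equation `P = L_K (H + E*(P)) L_Kᵀ`,
then the Q-function `Q(Z) = tr[Z H] + tr[P * E(Z)]` is a fixed point of the
policy Bellman operator: `tr[Z H] + Q(π_K(E(Z))) = Q(Z)` for all symmetric `Z`. -/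
theorem qfunction_fixed_point (n_w n_x n_u : ℕ)
    (W : Matrix (Fin n_w) (Fin n_w) ℝ) (hW : W.IsSymm)
    (M : Fin n_w → Matrix (Fin n_x) (Fin n_x ⊕ Fin n_u) ℝ)
    (K : Matrix (Fin n_u) (Fin n_x) ℝ)
    (H : Matrix (Fin n_x ⊕ Fin n_u) (Fin n_x ⊕ Fin n_u) ℝ) (hH : H.IsSymm)
    (P : Matrix (Fin n_x) (Fin n_x) ℝ) (hP : P.IsSymm)
    (hLyap : P = gainL K * (H + cpEstar W M P) * (gainL K)ᵀ)
    (Qfun : Matrix (Fin n_x ⊕ Fin n_u) (Fin n_x ⊕ Fin n_u) ℝ → ℝ)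
    (hQfun : ∀ Z, Qfun Z = (Z * H).trace + (P * cpE W M Z).trace) :
    ∀ Z : Matrix (Fin n_x ⊕ Fin n_u) (Fin n_x ⊕ Fin n_u) ℝ, Z.IsSymm →
      (Z * H).trace + Qfun (policy K (cpE W M Z)) = Qfun Z := by
  intro Z hZ
  rw [hQfun, hQfun]
  set L := gainL K
  set X := cpE W M Z with hX
  congr 1
  have h1 : (policy K X * H).trace = (X * (L * H * Lᵀ)).trace := by
    unfold policy; exact sandwich_trace L X H
  have h2 : (P * cpE W M (policy K X)).trace
      = (X * (L * cpEstar W M P * Lᵀ)).trace := by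
    rw [adj_trace W hW]
    unfold policy
    rw [Matrix.trace_mul_comm, sandwich_trace]
  rw [h1, h2, ← Matrix.trace_add, ← Matrix.mul_add, ← Matrix.add_mul,
    ← Matrix.mul_add, ← hLyap, Matrix.trace_mul_comm]
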